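/- arXiv:1904.08882 — 2 statements merged into one kernel-verified Lean document; each statement's English description precedes it below -/
import Mathlib

section
/- Let p be a prime, H > 0, and let X = (X_n)_{n∈ℕ₀} be a dt-ss-si process with scaling function b(n) = (|n|_p)^H. Then the distribution of X₁ has no atom except possibly at zero; that is, P(X₁ = x) = 0 for every real x ≠ 0. -/
open MeasureTheory ProbabilityTheory Filter

noncomputable section

/-- The `p`-adic norm of a natural number, as a real number (`0` for `n = 0`). -/
def padicNormNat (p n : ℕ) : ℝ := ((padicNorm p (n : ℚ) : ℚ) : ℝ)

/-- Equality in distribution of two families of random variables: the laws of the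
induced maps into the product space coincide. -/
def EqDistFam {ι Ω₁ Ω₂ E : Type*} [MeasurableSpace Ω₁] [MeasurableSpace Ω₂]
    [MeasurableSpace E]
    (P₁ : Measure Ω₁) (P₂ : Measure Ω₂) (X : ι → Ω₁ → E) (Y : ι → Ω₂ → E) : Prop :=
  Measure.map (fun ω i => X i ω) P₁ = Measure.map (fun ω i => Y i ω) P₂

/-- A discrete-time process is self-similar with scaling function `b` if for every `n ≥ 1`,
`(X (n*m))ₘ ≐ (b n • X m)ₘ`. -/
def SelfSimilar {Ω : Type*} [MeasurableSpace Ω] (P : Measure Ω) (X : ℕ → Ω → ℝ)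
    (b : ℕ → ℝ) : Prop :=
  ∀ n : ℕ, 1 ≤ n → EqDistFam P P (fun m ω => X (n * m) ω) (fun m ω => b n * X m ω)

/-- A discrete-time process has stationary increments if for every `k ≥ 1`,
`(X (m+1) - X m)ₘ ≐ (X (m+k+1) - X (m+k))ₘ`. -/
def StationaryIncrements {Ω : Type*} [MeasurableSpace Ω] (P : Measure Ω)
    (X : ℕ → Ω → ℝ) : Prop :=
  ∀ k : ℕ, 1 ≤ k → EqDistFam P P (fun m ω => X (m + 1) ω - X m ω)
    (fun m ω => X (m + k + 1) ω - X (m + k) ω)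

open scoped ENNReal Topology

section Aux

lemma eqdist_apply {Ω : Type*} [MeasurableSpace Ω] {P : Measure Ω} {U V : ℕ → Ω → ℝ}
    (hU : ∀ i, Measurable (U i)) (hV : ∀ i, Measurable (V i))
    (h : EqDistFam P P U V) {g : (ℕ → ℝ) → ℝ} (hg : Measurable g)
    {S : Set ℝ} (hS : MeasurableSet S) :
    P {ω | g (fun i => U i ω) ∈ S} = P {ω | g (fun i => V i ω) ∈ S} := by
  have hJU : Measurable fun ω (i : ℕ) => U i ω := measurable_pi_lambda _ hU
  have hJV : Measurable fun ω (i : ℕ) => V i ω := measurable_pi_lambda _ hV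
  have h2 := congrArg (fun μ : Measure (ℕ → ℝ) => μ (g ⁻¹' S)) h
  rw [Measure.map_apply hJU (hg hS), Measure.map_apply hJV (hg hS)] at h2
  exact h2

lemma bonferroni {Ω : Type*} [MeasurableSpace Ω] (P : Measure Ω) (A : ℕ → Set Ω)
    (hA : ∀ i, MeasurableSet (A i)) (N : ℕ) :
    ∑ i ∈ Finset.range N, P (A i) ≤
      P (⋃ i ∈ Finset.range N, A i) +
        ∑ i ∈ Finset.range N, ∑ j ∈ Finset.range i, P (A j ∩ A i) := by
  induction N with
  | zero => simp
  | succ N ih =>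
    rw [Finset.sum_range_succ,
      Finset.sum_range_succ (f := fun i => ∑ j ∈ Finset.range i, P (A j ∩ A i))]
    have hUnion : (⋃ i ∈ Finset.range (N + 1), A i) =
        (⋃ i ∈ Finset.range N, A i) ∪ A N := by
      rw [Finset.range_add_one]
      simp [Set.union_comm]
    have hInter : (⋃ i ∈ Finset.range N, A i) ∩ A N =
        ⋃ i ∈ Finset.range N, (A i ∩ A N) := by
      simp [Set.iUnion_inter]
    have key : P (⋃ i ∈ Finset.range N, A i) + P (A N) ≤
        P (⋃ i ∈ Finset.range (N + 1), A i) + ∑ j ∈ Finset.range N, P (A j ∩ A N) := by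
      rw [← measure_union_add_inter (⋃ i ∈ Finset.range N, A i) (hA N), ← hUnion, hInter]
      gcongr
      exact measure_biUnion_finset_le _ _
    calc (∑ i ∈ Finset.range N, P (A i)) + P (A N)
        ≤ (P (⋃ i ∈ Finset.range N, A i) +
            ∑ i ∈ Finset.range N, ∑ j ∈ Finset.range i, P (A j ∩ A i)) + P (A N) := by
          gcongr
      _ = (P (⋃ i ∈ Finset.range N, A i) + P (A N)) +
            ∑ i ∈ Finset.range N, ∑ j ∈ Finset.range i, P (A j ∩ A i) := by ring
      _ ≤ (P (⋃ i ∈ Finset.range (N + 1), A i) + ∑ j ∈ Finset.range N, P (A j ∩ A N)) +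
            ∑ i ∈ Finset.range N, ∑ j ∈ Finset.range i, P (A j ∩ A i) := by gcongr
      _ = P (⋃ i ∈ Finset.range (N + 1), A i) +
            ((∑ i ∈ Finset.range N, ∑ j ∈ Finset.range i, P (A j ∩ A i)) +
              ∑ j ∈ Finset.range N, P (A j ∩ A N)) := by ring

lemma padicNormNat_mul_pow (p : ℕ) (hp : p.Prime) (j u : ℕ) (hu : ¬ p ∣ u) (hu0 : u ≠ 0) :
    padicNormNat p (p ^ j * u) = (p : ℝ) ^ (-(j : ℤ)) := by
  haveI : Fact p.Prime := ⟨hp⟩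
  have hn0 : ((p ^ j * u : ℕ) : ℚ) ≠ 0 := by
    exact_mod_cast Nat.mul_ne_zero (pow_ne_zero _ hp.ne_zero) hu0
  unfold padicNormNat
  rw [padicNorm.eq_zpow_of_nonzero hn0]
  have hval : padicValRat p ((p ^ j * u : ℕ) : ℚ) = (j : ℤ) := by
    rw [padicValRat.of_nat]
    norm_cast
    rw [padicValNat.mul (pow_ne_zero _ hp.ne_zero) hu0, padicValNat.prime_pow,
      padicValNat.eq_zero_of_not_dvd hu]
    omega
  rw [hval]
  push_cast
  ring
end Aux

/-- Proposition 2.6 (5): for a type-II dt-ss-si process, the law of `X 1` has no atom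
except possibly at zero. -/
theorem stmt11 {Ω : Type*} [MeasurableSpace Ω] (P : Measure Ω) [IsProbabilityMeasure P]
    (X : ℕ → Ω → ℝ) (hXmeas : ∀ n, Measurable (X n))
    (p : ℕ) (hp : p.Prime) (H : ℝ) (hH : 0 < H)
    (hss : SelfSimilar P X (fun n => (padicNormNat p n) ^ H))
    (hsi : StationaryIncrements P X) :
    ∀ x : ℝ, x ≠ 0 → P {ω | X 1 ω = x} = 0 := by
  haveI : Fact p.Prime := ⟨hp⟩
  intro x hx
  by_contra ha0
  have hp1R : (1 : ℝ) < p := by exact_mod_cast hp.one_lt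
  have hp0R : (0 : ℝ) < p := by linarith
  set b : ℕ → ℝ := fun n => (padicNormNat p n) ^ H with hb
  set β : ℕ → ℝ := fun d => (p : ℝ) ^ (-(d : ℝ) * H) with hβ
  have hβpos : ∀ d, 0 < β d := fun d => Real.rpow_pos_of_pos hp0R _
  have hβne : ∀ d, β d ≠ 0 := fun d => (hβpos d).ne'
  have hβmul : ∀ j d, β (j + d) = β j * β d := by
    intro j d
    rw [hβ]
    simp only
    rw [← Real.rpow_add hp0R]
    congr 1
    push_cast
    ring
  have hβlt : ∀ {d e : ℕ}, d < e → β e < β d := by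
    intro d e hde
    apply (Real.rpow_lt_rpow_left_iff hp1R).mpr
    have h1 : (d : ℝ) < e := by exact_mod_cast hde
    nlinarith
  have hβinj : Function.Injective β := by
    intro d e h
    rcases lt_trichotomy d e with h1 | h1 | h1
    · exact absurd h (hβlt h1).ne'
    · exact h1
    · exact absurd h (hβlt h1).ne
  have hbval : ∀ (j u : ℕ), ¬ p ∣ u → u ≠ 0 → b (p ^ j * u) = β j := by
    intro j u hu hu0
    rw [hb]
    simp only
    rw [padicNormNat_mul_pow p hp j u hu hu0, ← Real.rpow_intCast (p : ℝ) (-(j : ℤ)),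
      ← Real.rpow_mul hp0R.le]
    rw [hβ]
    norm_num
  have hbpow : ∀ j : ℕ, b (p ^ j) = β j := by
    intro j
    have := hbval j 1 hp.not_dvd_one one_ne_zero
    simpa using this
  set a := P {ω | X 1 ω = x} with hadef
  have haT : a ≠ ⊤ := measure_ne_top P _
  set T : ℕ → ℝ≥0∞ := fun d => P {ω | X 1 ω - X 0 ω = (β d - 1) * x} with hT
  have hTdisj : Pairwise (Function.onFun Disjoint fun d : ℕ => {ω | X 1 ω - X 0 ω = (β d - 1) * x}) := by
    intro d e hde
    refine Set.disjoint_left.mpr fun ω h1 h2 => hde (hβinj ?_)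
    simp only [Set.mem_setOf_eq] at h1 h2
    have h3 : (β d - 1) * x = (β e - 1) * x := by rw [← h1, ← h2]
    have h4 := mul_right_cancel₀ hx h3
    linarith
  have hTmeas : ∀ d : ℕ, MeasurableSet {ω | X 1 ω - X 0 ω = (β d - 1) * x} := fun d =>
    ((hXmeas 1).sub (hXmeas 0)) (measurableSet_singleton _)
  have htsum : ∑' d, T d ≠ ⊤ := by
    rw [hT, ← measure_iUnion hTdisj hTmeas]
    exact (prob_le_one.trans_lt (by norm_num)).ne
  have hTtend : Tendsto T atTop (𝓝 0) := ENNReal.tendsto_atTop_zero_of_tsum_ne_top htsum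
  obtain ⟨N, hN⟩ := ENNReal.exists_nat_gt (show (3 : ℝ≥0∞) / a ≠ ⊤ by
    simp [ENNReal.div_eq_top, ha0])
  have hNa : (3 : ℝ≥0∞) < N * a := (ENNReal.div_lt_iff (Or.inl ha0) (Or.inl haT)).mp hN
  have hN0 : N ≠ 0 := by rintro rfl; simp at hNa
  set ε : ℝ≥0∞ := ((N : ℝ≥0∞) * N)⁻¹ with hε
  have hNne : ((N : ℝ≥0∞) * N) ≠ ⊤ := ENNReal.mul_ne_top (ENNReal.natCast_ne_top N)
    (ENNReal.natCast_ne_top N)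
  have hNnz : ((N : ℝ≥0∞) * N) ≠ 0 := by
    simp [hN0]
  have hεpos : 0 < ε := ENNReal.inv_pos.mpr hNne
  obtain ⟨D0, hD0⟩ := eventually_atTop.mp (hTtend.eventually_lt_const hεpos)
  set D := max D0 1 with hDdef
  have hD1 : 1 ≤ D := le_max_right _ _
  have hDD0 : D0 ≤ D := le_max_left _ _
  set A : ℕ → Set Ω := fun i => {ω | X (p ^ (D * (i + 1))) ω = β (D * (i + 1)) * x} with hA
  have hAmeas : ∀ i, MeasurableSet (A i) := fun i => (hXmeas _) (measurableSet_singleton _)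
  -- each event has probability a
  have hPA : ∀ i, P (A i) = a := by
    intro i
    set j := D * (i + 1) with hjdef
    have hn1 : 1 ≤ p ^ j := Nat.one_le_pow _ _ hp.pos
    have h1 := eqdist_apply (P := P) (U := fun m ω => X (p ^ j * m) ω)
      (V := fun m ω => b (p ^ j) * X m ω) (fun m => hXmeas _)
      (fun m => measurable_const.mul (hXmeas m)) (hss (p ^ j) hn1)
      (g := fun v => v 1) (measurable_pi_apply 1)
      (S := {β j * x}) (measurableSet_singleton _)
    simp only [Set.mem_singleton_iff, mul_one] at h1
    rw [hbpow j] at h1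
    have h2 : {ω | β j * X 1 ω = β j * x} = {ω | X 1 ω = x} := by
      ext ω
      exact mul_right_inj' (hβne j)
    rw [h2] at h1
    exact h1
  -- pairwise bound
  have hpair : ∀ i k : ℕ, i < k → P (A i ∩ A k) ≤ T (D * (k - i)) := by
    intro i k hik
    set j := D * (i + 1) with hjdef
    set d := D * (k - i) with hddef
    have hd1 : 1 ≤ d := by
      have : 1 ≤ k - i := by omega
      calc 1 = 1 * 1 := by ring
        _ ≤ D * (k - i) := Nat.mul_le_mul hD1 this
    have hjd : D * (k + 1) = j + d := by
      rw [hjdef, hddef, ← Nat.mul_add]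
      congr 1
      omega
    have hpd1 : 1 ≤ p ^ d := Nat.one_le_pow _ _ hp.pos
    set L := p ^ j * (p ^ d - 1) with hLdef
    have hLn : L + p ^ j = p ^ (j + d) := by
      rw [hLdef, pow_add]
      have h5 : p ^ j * (p ^ d - 1) = p ^ j * p ^ d - p ^ j := by
        obtain ⟨s, hs⟩ := Nat.exists_eq_add_of_le hpd1
        rw [hs]
        simp [Nat.mul_add]
      rw [h5]
      have h6 : p ^ j ≤ p ^ j * p ^ d := Nat.le_mul_of_pos_right _ (by omega)
      omega
    have hpdnd : ¬ p ∣ (p ^ d - 1) := by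
      intro hdvd
      have h7 : p ∣ p ^ d := dvd_pow_self p (by omega)
      have h8 : p ∣ p ^ d - (p ^ d - 1) := Nat.dvd_sub h7 hdvd
      have h9 : p ^ d - (p ^ d - 1) = 1 := by omega
      rw [h9] at h8
      exact hp.one_lt.ne' (Nat.dvd_one.mp h8)
    have hpd0 : p ^ d - 1 ≠ 0 := by
      have : p ≤ p ^ d := Nat.le_self_pow (by omega) p
      have := hp.two_le
      omega
    have hL1 : 1 ≤ L := by
      rw [hLdef]
      have : 1 ≤ p ^ d - 1 := by omega
      calc 1 = 1 * 1 := by ring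
        _ ≤ p ^ j * (p ^ d - 1) := Nat.mul_le_mul (Nat.one_le_pow _ _ hp.pos) this
    have hLb : b L = β j := hbval j (p ^ d - 1) hpdnd hpd0
    -- the common difference value
    set y : ℝ := β j * ((β d - 1) * x) with hydef
    -- subset step
    have hsub : A i ∩ A k ⊆ {ω | X (L + p ^ j) ω - X (p ^ j) ω = y} := by
      rintro ω ⟨h1, h2⟩
      simp only [hA, Set.mem_setOf_eq] at h1 h2 ⊢
      rw [hLn]
      rw [show D * (k + 1) = j + d from hjd] at h2
      rw [h2, h1, hβmul j d, hydef]
      ring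
    -- stationary increments step
    have hsiP := eqdist_apply (P := P) (U := fun m ω => X (m + 1) ω - X m ω)
      (V := fun m ω => X (m + p ^ j + 1) ω - X (m + p ^ j) ω)
      (fun m => (hXmeas (m + 1)).sub (hXmeas m))
      (fun m => (hXmeas (m + p ^ j + 1)).sub (hXmeas (m + p ^ j)))
      (hsi (p ^ j) (Nat.one_le_pow _ _ hp.pos))
      (g := fun v => ∑ m ∈ Finset.range L, v m)
      (Finset.measurable_sum _ (fun m _ => measurable_pi_apply m))
      (S := {y}) (measurableSet_singleton _)
    simp only [Set.mem_singleton_iff] at hsiP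
    have e1 : ∀ ω : Ω, (∑ m ∈ Finset.range L, (X (m + 1) ω - X m ω)) = X L ω - X 0 ω :=
      fun ω => Finset.sum_range_sub (fun m => X m ω) L
    have e2 : ∀ ω : Ω, (∑ m ∈ Finset.range L, (X (m + p ^ j + 1) ω - X (m + p ^ j) ω))
        = X (L + p ^ j) ω - X (p ^ j) ω := by
      intro ω
      have h10 := Finset.sum_range_sub (fun m => X (m + p ^ j) ω) L
      simp only [Nat.zero_add] at h10
      rw [← h10]
      refine Finset.sum_congr rfl fun m _ => ?_
      congr 2
      omega
    simp only [e1, e2] at hsiP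
    -- self-similarity step
    have hssP := eqdist_apply (P := P) (U := fun m ω => X (L * m) ω)
      (V := fun m ω => b L * X m ω) (fun m => hXmeas _)
      (fun m => measurable_const.mul (hXmeas m)) (hss L hL1)
      (g := fun v => v 1 - v 0)
      ((measurable_pi_apply 1).sub (measurable_pi_apply 0))
      (S := {y}) (measurableSet_singleton _)
    simp only [Set.mem_singleton_iff, mul_one, mul_zero, Nat.mul_zero, Nat.mul_one] at hssP
    rw [hLb] at hssP
    have h11 : {ω | β j * X 1 ω - β j * X 0 ω = y} = {ω | X 1 ω - X 0 ω = (β d - 1) * x} := by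
      ext ω
      simp only [Set.mem_setOf_eq, hydef, ← mul_sub]
      exact mul_right_inj' (hβne j)
    rw [h11] at hssP
    calc P (A i ∩ A k) ≤ P {ω | X (L + p ^ j) ω - X (p ^ j) ω = y} := measure_mono hsub
      _ = P {ω | X L ω - X 0 ω = y} := hsiP.symm
      _ = T d := by rw [hT]; exact hssP
  -- Bonferroni and conclusion
  have hbonf := bonferroni P A hAmeas N
  have hsum1 : ∑ i ∈ Finset.range N, P (A i) = N * a := by
    simp [hPA, Finset.sum_const, Finset.card_range, nsmul_eq_mul]
  have hpairs : ∑ i ∈ Finset.range N, ∑ jj ∈ Finset.range i, P (A jj ∩ A i) ≤ 1 := by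
    have hterm : ∀ i ∈ Finset.range N, ∀ jj ∈ Finset.range i, P (A jj ∩ A i) ≤ ε := by
      intro i _ jj hjj
      have hji : jj < i := Finset.mem_range.mp hjj
      refine (hpair jj i hji).trans ?_
      refine (hD0 _ ?_).le
      calc D0 ≤ D := hDD0
        _ = D * 1 := (Nat.mul_one D).symm
        _ ≤ D * (i - jj) := Nat.mul_le_mul_left D (by omega)
    calc ∑ i ∈ Finset.range N, ∑ jj ∈ Finset.range i, P (A jj ∩ A i)
        ≤ ∑ i ∈ Finset.range N, ∑ jj ∈ Finset.range i, ε := by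
          refine Finset.sum_le_sum fun i hi => Finset.sum_le_sum fun jj hjj => ?_
          exact hterm i hi jj hjj
      _ ≤ ∑ i ∈ Finset.range N, ∑ jj ∈ Finset.range N, ε := by
          refine Finset.sum_le_sum fun i hi => ?_
          refine Finset.sum_le_sum_of_subset ?_
          exact Finset.range_subset_range.mpr (Finset.mem_range.mp hi).le
      _ = (N : ℝ≥0∞) * N * ε := by
          simp [Finset.sum_const, Finset.card_range, nsmul_eq_mul]
          ring
      _ = 1 := ENNReal.mul_inv_cancel hNnz hNne
  have hfinal : (N : ℝ≥0∞) * a ≤ 2 := by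
    calc (N : ℝ≥0∞) * a = ∑ i ∈ Finset.range N, P (A i) := hsum1.symm
      _ ≤ P (⋃ i ∈ Finset.range N, A i) +
          ∑ i ∈ Finset.range N, ∑ jj ∈ Finset.range i, P (A jj ∩ A i) := hbonf
      _ ≤ 1 + 1 := add_le_add prob_le_one hpairs
      _ = 2 := by norm_num
  have : (3 : ℝ≥0∞) < 2 := hNa.trans_le hfinal
  norm_num at this
end
end

section
/- Let p be a prime, H > 0, and let X = (X_n)_{n∈ℕ₀} be a dt-ss-si process with scaling function b(n) = (|n|_p)^H such that E(X₁²) < ∞. Then X is almost periodic in L²: for every ε > 0 there exists N ∈ ℕ such that among any N consecutive positive integers there is an integer τ with E((X_{n+τ} − X_n)²) ≤ ε for all n ∈ ℕ₀. -/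
open MeasureTheory ProbabilityTheory Filter
open scoped ENNReal NNReal

noncomputable section

/- ---------- auxiliary lemmas ---------- -/

lemma eqdist_comp {Ω : Type*} [MeasurableSpace Ω] {P : Measure Ω} {X Y : ℕ → Ω → ℝ}
    (hX : ∀ n, Measurable (X n)) (hY : ∀ n, Measurable (Y n))
    (h : EqDistFam P P X Y) {g : (ℕ → ℝ) → ℝ} (hg : Measurable g) :
    Measure.map (fun ω => g (fun i => X i ω)) P
      = Measure.map (fun ω => g (fun i => Y i ω)) P := by
  have hX' : Measurable (fun ω i => X i ω) := measurable_pi_lambda _ hX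
  have hY' : Measurable (fun ω i => Y i ω) := measurable_pi_lambda _ hY
  calc Measure.map (fun ω => g (fun i => X i ω)) P
      = Measure.map g (Measure.map (fun ω i => X i ω) P) := (Measure.map_map hg hX').symm
    _ = Measure.map g (Measure.map (fun ω i => Y i ω) P) := by rw [h]
    _ = _ := Measure.map_map hg hY'

lemma eLpNorm_eq_of_map_eq {Ω₁ Ω₂ : Type*} [MeasurableSpace Ω₁] [MeasurableSpace Ω₂]
    {P : Measure Ω₁} {Q : Measure Ω₂} {f : Ω₁ → ℝ} {g : Ω₂ → ℝ}
    (hf : Measurable f) (hg : Measurable g)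
    (h : Measure.map f P = Measure.map g Q) :
    eLpNorm f 2 P = eLpNorm g 2 Q := by
  have h1 : eLpNorm f 2 P = eLpNorm (id : ℝ → ℝ) 2 (Measure.map f P) :=
    (eLpNorm_map_measure aestronglyMeasurable_id hf.aemeasurable).symm
  have h2 : eLpNorm g 2 Q = eLpNorm (id : ℝ → ℝ) 2 (Measure.map g Q) :=
    (eLpNorm_map_measure aestronglyMeasurable_id hg.aemeasurable).symm
  rw [h1, h2, h]

lemma lintegral_ofReal_sq {Ω : Type*} [MeasurableSpace Ω] (P : Measure Ω) (h : Ω → ℝ) :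
    ∫⁻ ω, ENNReal.ofReal ((h ω) ^ 2) ∂P = (eLpNorm h 2 P) ^ (2 : ℝ) := by
  have hpt : ∀ ω, ENNReal.ofReal ((h ω) ^ 2) = (‖h ω‖₊ : ℝ≥0∞) ^ (2 : ℝ) := by
    intro ω
    rw [show h ω ^ 2 = ‖h ω‖ ^ 2 by rw [Real.norm_eq_abs, sq_abs],
        ENNReal.ofReal_pow (norm_nonneg _), ofReal_norm, enorm_eq_nnnorm,
        ← ENNReal.rpow_natCast]
    norm_num
  simp_rw [hpt]
  rw [eLpNorm_eq_lintegral_rpow_enorm_toReal (by norm_num) (by norm_num), ← ENNReal.rpow_mul]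
  simp_rw [enorm_eq_nnnorm]
  norm_num

/-- Proposition 4.1: a square-integrable type-II dt-ss-si process is almost periodic
in `L²`. -/
theorem stmt15 {Ω : Type*} [MeasurableSpace Ω] (P : Measure Ω) [IsProbabilityMeasure P]
    (X : ℕ → Ω → ℝ) (hXmeas : ∀ n, Measurable (X n))
    (p : ℕ) (hp : p.Prime) (H : ℝ) (hH : 0 < H)
    (hss : SelfSimilar P X (fun n => (padicNormNat p n) ^ H))
    (hsi : StationaryIncrements P X)
    (hL2 : Integrable (fun ω => (X 1 ω) ^ 2) P) :
    ∀ ε : ℝ, 0 < ε → ∃ N : ℕ, 0 < N ∧ ∀ a : ℕ, 1 ≤ a →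
      ∃ τ : ℕ, a ≤ τ ∧ τ < a + N ∧
        ∀ n : ℕ, ∫ ω, (X (n + τ) ω - X n ω) ^ 2 ∂P ≤ ε := by
  intro ε hε
  have hp1 : (1 : ℝ) < p := by exact_mod_cast hp.one_lt
  have hp0 : (0 : ℝ) < p := lt_trans one_pos hp1
  set c : ℝ := (p : ℝ)⁻¹ ^ H with hc_def
  have hc0 : 0 < c := Real.rpow_pos_of_pos (inv_pos.mpr hp0) H
  have hc1 : c < 1 := Real.rpow_lt_one (inv_pos.mpr hp0).le (inv_lt_one_of_one_lt₀ hp1) hH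
  have hbp : padicNormNat p p ^ H = c := by
    have : padicNormNat p p = (p : ℝ)⁻¹ := by
      unfold padicNormNat
      rw [show ((p : ℕ) : ℚ) = (p : ℚ) from rfl, padicNorm.padicNorm_p hp.one_lt]
      push_cast
      ring
    rw [this]
  set C : ℝ≥0∞ := ENNReal.ofReal c with hC_def
  set f : ℕ → ℝ≥0∞ := fun m => eLpNorm (X m) 2 P with hf_def
  have hmap_scale : ∀ m : ℕ,
      Measure.map (X (p * m)) P = Measure.map (fun ω => c * X m ω) P := by
    intro m
    have h := eqdist_comp (P := P)
      (X := fun m ω => X (p * m) ω) (Y := fun m ω => padicNormNat p p ^ H * X m ω)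
      (fun m => hXmeas _) (fun m => (hXmeas m).const_mul _)
      (hss p hp.one_le) (g := fun u => u m) (measurable_pi_apply m)
    simpa [hbp] using h
  have hscale : ∀ m : ℕ, f (p * m) = C * f m := by
    intro m
    have h := eLpNorm_eq_of_map_eq (hXmeas _) ((hXmeas m).const_mul c) (hmap_scale m)
    have h2 : eLpNorm (fun ω => c * X m ω) 2 P = (‖c‖₊ : ℝ≥0∞) * eLpNorm (X m) 2 P :=
      eLpNorm_const_smul c (X m) 2 P
    have h3 : ((‖c‖₊ : ℝ≥0∞)) = C := by
      rw [hC_def, ← enorm_eq_nnnorm, ← ofReal_norm, Real.norm_eq_abs, abs_of_nonneg hc0.le]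
    rw [hf_def]
    simp only
    rw [h, h2, h3]
  -- X 0 = 0 a.e.
  have hX0 : X 0 =ᵐ[P] 0 := by
    set ν : Measure ℝ := Measure.map (X 0) P with hν_def
    have hνprob : IsProbabilityMeasure ν := Measure.isProbabilityMeasure_map (hXmeas 0).aemeasurable
    have hmap : ν = Measure.map (fun x => c * x) ν := by
      have h0 := hmap_scale 0
      rw [Nat.mul_zero] at h0
      have hmm : Measure.map (fun x => c * x) ν = Measure.map (fun ω => c * X 0 ω) P := by
        rw [hν_def, Measure.map_map (measurable_const_mul c) (hXmeas 0)]
        rfl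
      rw [hmm]
      exact hν_def.trans h0
    have tails : ∀ t : ℝ, 0 < t → ν {x | t < |x|} = 0 := by
      intro t ht
      set A : ℕ → Set ℝ := fun k => {x | t / c ^ k < |x|} with hA_def
      have hmeasA : ∀ k, MeasurableSet (A k) :=
        fun k => measurableSet_lt measurable_const (continuous_abs.measurable)
      have hanti : Antitone A := by
        intro k l hkl x hx
        have hck : c ^ l ≤ c ^ k := pow_le_pow_of_le_one hc0.le hc1.le hkl
        have : t / c ^ k ≤ t / c ^ l :=
          div_le_div_of_nonneg_left ht.le (pow_pos hc0 l) hck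
        exact lt_of_le_of_lt this hx
      have hconst : ∀ k, ν (A k) = ν (A 0) := by
        intro k
        induction k with
        | zero => rfl
        | succ k ih =>
          rw [← ih]
          have : ν (A k) = ν ((fun x => c * x) ⁻¹' (A k)) := by
            conv_lhs => rw [hmap]
            rw [Measure.map_apply (measurable_const_mul c) (hmeasA k)]
          rw [this]
          congr 1
          ext x
          simp only [hA_def, Set.mem_preimage, Set.mem_setOf_eq]
          rw [abs_mul, abs_of_nonneg hc0.le]
          rw [pow_succ]
          rw [div_lt_iff₀ (by positivity), div_lt_iff₀ (by positivity)]
          ring_nf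
      have hInter : (⋂ k, A k) = ∅ := by
        ext x
        simp only [Set.mem_iInter, Set.mem_empty_iff_false, iff_false, not_forall]
        obtain ⟨k, hk⟩ := exists_pow_lt_of_lt_one (x := t / (|x| + 1)) (by positivity) hc1
        refine ⟨k, ?_⟩
        simp only [hA_def, Set.mem_setOf_eq, not_lt]
        have hck : (0:ℝ) < c ^ k := pow_pos hc0 k
        rw [lt_div_iff₀ (by positivity)] at hk
        have : |x| + 1 ≤ t / c ^ k := by
          rw [le_div_iff₀ hck]
          nlinarith [abs_nonneg x]
        linarith
      have htend := MeasureTheory.tendsto_measure_iInter_atTop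
        (fun k => (hmeasA k).nullMeasurableSet) hanti ⟨0, measure_ne_top ν _⟩
      rw [hInter] at htend
      have htend2 : Tendsto (fun k => ν (A k)) atTop (nhds (ν (A 0))) := by
        simp only [hconst]
        exact tendsto_const_nhds
      have := tendsto_nhds_unique htend2 htend
      simpa [hA_def] using this
    have hne : ν {x : ℝ | x ≠ 0} = 0 := by
      have hsub : {x : ℝ | x ≠ 0} ⊆ ⋃ k : ℕ, {x : ℝ | 1 / (k + 1 : ℝ) < |x|} := by
        intro x hx
        have : 0 < |x| := abs_pos.mpr hx
        obtain ⟨k, hk⟩ := exists_nat_one_div_lt this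
        exact Set.mem_iUnion.mpr ⟨k, hk⟩
      refine measure_mono_null hsub (measure_iUnion_null fun k => tails _ (by positivity))
    rw [Filter.EventuallyEq, ae_iff]
    simp only [Pi.zero_apply]
    have heq : {ω | ¬ X 0 ω = 0} = X 0 ⁻¹' {x : ℝ | x ≠ 0} := rfl
    rw [heq, ← Measure.map_apply (hXmeas 0)
      (show MeasurableSet {x : ℝ | x ≠ 0} from (measurableSet_singleton (0:ℝ)).compl)]
    exact hne
  have hf0 : f 0 = 0 := by
    rw [hf_def]
    simp only
    rw [eLpNorm_congr_ae hX0]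
    simp
  -- increments all have the same L² norm σ < ∞
  set σ : ℝ≥0∞ := eLpNorm (fun ω => X 1 ω - X 0 ω) 2 P with hσ_def
  have hσm : ∀ m : ℕ, eLpNorm (fun ω => X (m + 1) ω - X m ω) 2 P = σ := by
    intro m
    rcases Nat.eq_zero_or_pos m with hm | hm
    · subst hm; rfl
    · have h := eqdist_comp (P := P)
        (X := fun j ω => X (j + 1) ω - X j ω)
        (Y := fun j ω => X (j + m + 1) ω - X (j + m) ω)
        (fun j => (hXmeas _).sub (hXmeas _)) (fun j => (hXmeas _).sub (hXmeas _))
        (hsi m hm) (g := fun u => u 0) (measurable_pi_apply 0)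
      have h' := eLpNorm_eq_of_map_eq (f := fun ω => X 1 ω - X 0 ω)
        (g := fun ω => X (0 + m + 1) ω - X (0 + m) ω) ((hXmeas 1).sub (hXmeas 0))
        ((hXmeas _).sub (hXmeas _)) h
      simpa [hσ_def] using h'.symm
  have hσfin : σ ≠ ⊤ := by
    have hcong : (fun ω => X 1 ω - X 0 ω) =ᵐ[P] X 1 := by
      filter_upwards [hX0] with ω hω
      simp [hω]
    rw [hσ_def, eLpNorm_congr_ae hcong]
    have hmem : MemLp (X 1) 2 P :=
      (memLp_two_iff_integrable_sq (hXmeas 1).aestronglyMeasurable).mpr hL2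
    exact hmem.2.ne
  -- step bound
  have hstep : ∀ m : ℕ, f (m + 1) ≤ f m + σ := by
    intro m
    have hXeq : X (m + 1) = (fun ω => X m ω) + (fun ω => X (m+1) ω - X m ω) := by
      funext ω; simp
    rw [hf_def]
    simp only
    rw [hXeq]
    calc eLpNorm ((fun ω => X m ω) + (fun ω => X (m+1) ω - X m ω)) 2 P
        ≤ eLpNorm (X m) 2 P + eLpNorm (fun ω => X (m+1) ω - X m ω) 2 P :=
          eLpNorm_add_le (hXmeas m).aestronglyMeasurable
            (((hXmeas _).sub (hXmeas _)).aestronglyMeasurable) (by norm_num)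
      _ = eLpNorm (X m) 2 P + σ := by rw [hσm m]
  have hlin : ∀ a j : ℕ, f (a + j) ≤ f a + j * σ := by
    intro a j
    induction j with
    | zero => simp
    | succ j ih =>
      calc f (a + (j + 1)) = f ((a + j) + 1) := by ring_nf
        _ ≤ f (a + j) + σ := hstep _
        _ ≤ f a + j * σ + σ := add_le_add_left ih σ
        _ = f a + (j + 1 : ℕ) * σ := by push_cast; ring
  have hffin : ∀ m, f m ≠ ⊤ := by
    intro m
    have := hlin 0 m
    rw [Nat.zero_add, hf0, zero_add] at this
    exact ne_top_of_le_ne_top (by simp [ENNReal.mul_ne_top, hσfin]) this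
  -- uniform bound K
  set s : ℝ := σ.toReal with hs_def
  have hs0 : 0 ≤ s := ENNReal.toReal_nonneg
  set K : ℝ := (p * s) / (1 - c) with hK_def
  have hK0 : 0 ≤ K := by
    apply div_nonneg (by positivity) (by linarith)
  have hσ_eq : σ = ENNReal.ofReal s := (ENNReal.ofReal_toReal hσfin).symm
  have hKbound : ∀ m : ℕ, f m ≤ ENNReal.ofReal K := by
    intro m
    induction m using Nat.strong_induction_on with
    | _ m ih =>
      rcases Nat.eq_zero_or_pos m with hm | hm
      · subst hm; rw [hf0]; exact zero_le
      · set q := m / p with hq_def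
        set r := m % p with hr_def
        have hmq : m = p * q + r := (Nat.div_add_mod m p).symm
        have hqm : q < m := Nat.div_lt_self hm hp.one_lt
        have hrp : r < p := Nat.mod_lt m hp.pos
        calc f m = f (p * q + r) := by rw [← hmq]
          _ ≤ f (p * q) + r * σ := hlin _ _
          _ = C * f q + r * σ := by rw [hscale]
          _ ≤ C * ENNReal.ofReal K + r * σ :=
              add_le_add_left (mul_le_mul_right (ih q hqm) C) _
          _ ≤ ENNReal.ofReal (c * K) + ENNReal.ofReal (p * s) := by
              apply add_le_add
              · rw [hC_def, ← ENNReal.ofReal_mul hc0.le]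
              · rw [hσ_eq, ← ENNReal.ofReal_natCast, ← ENNReal.ofReal_mul (by positivity)]
                apply ENNReal.ofReal_le_ofReal
                have : (r : ℝ) ≤ p := by exact_mod_cast hrp.le
                nlinarith
          _ ≤ ENNReal.ofReal K := by
              rw [← ENNReal.ofReal_add (by nlinarith) (by positivity)]
              apply ENNReal.ofReal_le_ofReal
              have h1c : (0:ℝ) < 1 - c := by linarith
              have : K * (1 - c) = p * s := by
                rw [hK_def]; field_simp
              nlinarith
  -- iterated scaling
  have hscalek : ∀ k m : ℕ, f (p ^ k * m) = C ^ k * f m := by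
    intro k
    induction k with
    | zero => intro m; simp
    | succ k ih =>
      intro m
      have : p ^ (k + 1) * m = p * (p ^ k * m) := by ring
      rw [this, hscale, ih, pow_succ]
      ring
  -- shift invariance of increments over any gap
  have hshift : ∀ n τ : ℕ,
      eLpNorm (fun ω => X (n + τ) ω - X n ω) 2 P = f τ := by
    intro n τ
    have hbase : eLpNorm (fun ω => X τ ω - X 0 ω) 2 P = f τ := by
      have hcong : (fun ω => X τ ω - X 0 ω) =ᵐ[P] X τ := by
        filter_upwards [hX0] with ω hω
        simp [hω]
      rw [eLpNorm_congr_ae hcong]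
    rcases Nat.eq_zero_or_pos n with hn | hn
    · subst hn; simpa using hbase
    · have hg : Measurable (fun u : ℕ → ℝ => ∑ j ∈ Finset.range τ, u j) :=
        Finset.measurable_sum _ (fun j _ => measurable_pi_apply j)
      have h := eqdist_comp (P := P)
        (X := fun j ω => X (j + 1) ω - X j ω)
        (Y := fun j ω => X (j + n + 1) ω - X (j + n) ω)
        (fun j => (hXmeas _).sub (hXmeas _)) (fun j => (hXmeas _).sub (hXmeas _))
        (hsi n hn) hg
      have e1 : (fun ω => ∑ j ∈ Finset.range τ,
          ((fun j ω => X (j + 1) ω - X j ω) j ω)) = fun ω => X τ ω - X 0 ω := by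
        funext ω
        exact Finset.sum_range_sub (fun j => X j ω) τ
      have e2 : (fun ω => ∑ j ∈ Finset.range τ,
          ((fun j ω => X (j + n + 1) ω - X (j + n) ω) j ω))
            = fun ω => X (n + τ) ω - X n ω := by
        funext ω
        have : ∑ j ∈ Finset.range τ, (X (j + n + 1) ω - X (j + n) ω)
            = ∑ j ∈ Finset.range τ,
              ((fun j => X (j + n) ω) (j + 1) - (fun j => X (j + n) ω) j) := by
          apply Finset.sum_congr rfl
          intro j _
          simp only
          congr 2
          omega
        rw [this, Finset.sum_range_sub (fun j => X (j + n) ω)]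
        simp only [Nat.zero_add]
        congr 2
        omega
      rw [e1, e2] at h
      rw [eLpNorm_eq_of_map_eq (f := fun ω => X (n + τ) ω - X n ω) (g := fun ω => X τ ω - X 0 ω) ((hXmeas _).sub (hXmeas _)) ((hXmeas _).sub (hXmeas _)) h.symm]
      exact hbase
  -- choose k
  obtain ⟨k, hk⟩ := exists_pow_lt_of_lt_one
    (x := Real.sqrt ε / (K + 1)) (by positivity) hc1
  have hckK : c ^ k * K ≤ Real.sqrt ε := by
    have hck0 : (0:ℝ) ≤ c ^ k := (pow_pos hc0 k).le
    have h1 : c ^ k * (K + 1) < Real.sqrt ε := by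
      rw [lt_div_iff₀ (by positivity)] at hk
      nlinarith
    nlinarith
  refine ⟨p ^ k, Nat.pow_pos hp.pos, ?_⟩
  intro a ha
  set Q := p ^ k with hQ_def
  have hQ1 : 0 < Q := Nat.pow_pos hp.pos
  set m := (a + Q - 1) / Q with hm_def
  refine ⟨Q * m, ?_, ?_, ?_⟩
  · have h1 : Q * m + (a + Q - 1) % Q = a + Q - 1 := Nat.div_add_mod _ _
    have h2 : (a + Q - 1) % Q < Q := Nat.mod_lt _ (by omega)
    omega
  · have h1 : Q * m + (a + Q - 1) % Q = a + Q - 1 := Nat.div_add_mod _ _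
    have h2 : (a + Q - 1) % Q < Q := Nat.mod_lt _ (by omega)
    omega
  · intro n
    have hmeas2 : AEStronglyMeasurable (fun ω => (X (n + Q * m) ω - X n ω) ^ 2) P :=
      (((hXmeas _).sub (hXmeas _)).pow_const 2).aestronglyMeasurable
    rw [integral_eq_lintegral_of_nonneg_ae
      (Filter.Eventually.of_forall (fun ω => sq_nonneg _)) hmeas2]
    rw [lintegral_ofReal_sq]
    have hnorm : eLpNorm (fun ω => X (n + Q * m) ω - X n ω) 2 P ≤ ENNReal.ofReal (Real.sqrt ε) := by
      rw [hshift n (Q * m), hQ_def, hscalek k m]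
      calc C ^ k * f m ≤ C ^ k * ENNReal.ofReal K :=
            mul_le_mul_right (hKbound m) _
        _ = ENNReal.ofReal (c ^ k * K) := by
            rw [hC_def, ← ENNReal.ofReal_pow hc0.le, ← ENNReal.ofReal_mul (by positivity)]
        _ ≤ ENNReal.ofReal (Real.sqrt ε) := ENNReal.ofReal_le_ofReal hckK
    have hfinal : (eLpNorm (fun ω => X (n + Q * m) ω - X n ω) 2 P) ^ (2:ℝ)
        ≤ ENNReal.ofReal ε := by
      calc (eLpNorm (fun ω => X (n + Q * m) ω - X n ω) 2 P) ^ (2:ℝ)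
          ≤ (ENNReal.ofReal (Real.sqrt ε)) ^ (2:ℝ) :=
            ENNReal.rpow_le_rpow hnorm (by norm_num)
        _ = ENNReal.ofReal (Real.sqrt ε ^ (2:ℝ)) :=
            ENNReal.ofReal_rpow_of_nonneg (Real.sqrt_nonneg _) (by norm_num)
        _ = ENNReal.ofReal ε := by
            rw [Real.rpow_two, Real.sq_sqrt hε.le]
    exact ENNReal.toReal_le_of_le_ofReal hε.le hfinal
end
end
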